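/- arXiv:2501.08487 — 2 statements merged into one kernel-verified Lean document; each statement's English description precedes it below -/
import Mathlib

section
/- Let (X_n)_{n≥1} be i.i.d. real random variables with zero mean such that P(|S_n| ≥ εn) ≤ e^{−c_ε n} for all large n (large deviation bound), and with finite exponential moment. Then for every ε > 0, the sum over n of P( max_{|i−n| ≤ M√(n log log n)} |S_i − S_n| ≥ ε·M√(n log log n) ) is finite. -/
open MeasureTheory ProbabilityTheory Filter


lemma exp_le_one_add_sq (u : ℝ) : Real.exp u ≤ 1 + u + u ^ 2 * Real.exp |u| := by
  rcases le_or_gt 0 u with hu | hu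
  · rw [abs_of_nonneg hu]
    have hmul : Real.exp u * Real.exp (-u) = 1 := by rw [← Real.exp_add]; simp
    have h1 : (1 - u) * Real.exp u ≤ 1 := by
      have h := Real.add_one_le_exp (-u)
      nlinarith [Real.exp_pos u]
    nlinarith [Real.exp_pos u]
  · rw [abs_of_neg hu]
    have h5 : 1 - u ≤ Real.exp (-u) := by have := Real.add_one_le_exp (-u); linarith
    have h3 : Real.exp u * Real.exp (-u) = 1 := by rw [← Real.exp_add]; simp
    have h4 : Real.exp u ≤ 1 / (1 - u) := by
      rw [le_div_iff₀ (by linarith : (0:ℝ) < 1 - u)]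
      nlinarith [Real.exp_pos u]
    have h6 : 1 / (1 - u) ≤ 1 + u + u ^ 2 := by
      rw [div_le_iff₀ (by linarith : (0:ℝ) < 1 - u)]
      nlinarith
    have h7 : (1:ℝ) ≤ Real.exp (-u) := by
      have := Real.add_one_le_exp (-u); linarith
    nlinarith [sq_nonneg u]


lemma chernoff_aux {Ω : Type*} [MeasureSpace Ω] [IsProbabilityMeasure (ℙ : Measure Ω)]
    (X : ℕ → Ω → ℝ) (hmeas : ∀ i, Measurable (X i))
    (hindep : iIndepFun X ℙ)
    (hident : ∀ i, IdentDistrib (X i) (X 0) ℙ ℙ)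
    (t D r : ℝ) (ht : 0 ≤ t) (hD : mgf (X 0) ℙ t ≤ D)
    (hint : Integrable (fun ω => Real.exp (t * X 0 ω)) ℙ)
    (s : Finset ℕ) :
    (ℙ {ω | r ≤ ∑ j ∈ s, X j ω}).toReal ≤ Real.exp (-t * r) * D ^ s.card := by
  have hint' : ∀ j ∈ s, Integrable (fun ω => Real.exp (t * X j ω)) ℙ := by
    intro j _
    exact ((hident j).comp (Real.measurable_exp.comp (measurable_const_mul t))).integrable_iff.mpr
      hint
  have hsum_int : Integrable (fun ω => Real.exp (t * (∑ j ∈ s, X j) ω)) ℙ :=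
    hindep.integrable_exp_mul_sum hmeas hint'
  have hset : {ω | r ≤ ∑ j ∈ s, X j ω} = {ω | r ≤ (∑ j ∈ s, X j) ω} := by
    ext ω; simp [Finset.sum_apply]
  have hch := measure_ge_le_exp_mul_mgf (X := ∑ j ∈ s, X j) (μ := ℙ) r ht hsum_int
  rw [hset]
  refine hch.trans ?_
  have hmgf_eq : mgf (∑ j ∈ s, X j) ℙ t = (mgf (X 0) ℙ t) ^ s.card := by
    rw [hindep.mgf_sum hmeas]
    rw [Finset.prod_congr rfl (fun j _ => ?_), Finset.prod_const]
    exact ((hident j).comp (Real.measurable_exp.comp (measurable_const_mul t))).integral_eq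
  rw [hmgf_eq]
  exact mul_le_mul_of_nonneg_left (pow_le_pow_left₀ mgf_nonneg hD _) (Real.exp_pos _).le

lemma key_bound {Ω : Type*} [MeasureSpace Ω] [IsProbabilityMeasure (ℙ : Measure Ω)]
    (X : ℕ → Ω → ℝ) (hmeas : ∀ i, Measurable (X i))
    (hindep : iIndepFun X ℙ)
    (hident : ∀ i, IdentDistrib (X i) (X 0) ℙ ℙ)
    (S : ℕ → Ω → ℝ) (hS : ∀ n ω, S n ω = ∑ i ∈ Finset.range n, X i ω)
    (t B ε K : ℝ) (ht0 : 0 < t) (hB : 0 ≤ B) (hε : 0 < ε) (hK0 : 0 ≤ K)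
    (htB : t * B ≤ ε / 4)
    (hmgfP : mgf (X 0) ℙ t ≤ Real.exp (t ^ 2 * B))
    (hmgfN : mgf (fun ω => -X 0 ω) ℙ t ≤ Real.exp (t ^ 2 * B))
    (hintP : Integrable (fun ω => Real.exp (t * X 0 ω)) ℙ)
    (hintN : Integrable (fun ω => Real.exp (t * -X 0 ω)) ℙ)
    (n : ℕ) :
    (ℙ {ω | sSup {x : ℝ | ∃ i : ℕ, |(i : ℝ) - (n : ℝ)| ≤ K ∧ x = |S i ω - S n ω|}
        ≥ ε * K}).toReal ≤ ((n : ℝ) + K + 2) * (2 * Real.exp (-(t * ε / 2) * K)) := by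
  classical
  set β := Real.exp (-(t * ε / 2) * K) with hβ
  have hβ0 : 0 < β := Real.exp_pos _
  set N := n + ⌈K⌉₊ with hN
  -- tail bound for a generic iid family
  have tail : ∀ (Y : ℕ → Ω → ℝ), (∀ i, Measurable (Y i)) →
      iIndepFun Y ℙ → (∀ i, IdentDistrib (Y i) (Y 0) ℙ ℙ) →
      Integrable (fun ω => Real.exp (t * Y 0 ω)) ℙ →
      mgf (Y 0) ℙ t ≤ Real.exp (t ^ 2 * B) →
      ∀ s : Finset ℕ, (s.card : ℝ) ≤ K →
      (ℙ {ω | ε * K ≤ ∑ j ∈ s, Y j ω}).toReal ≤ β := by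
    intro Y hm hi hid hint hmg s hcard
    refine (chernoff_aux Y hm hi hid t _ (ε * K) ht0.le hmg hint s).trans ?_
    rw [← Real.exp_nat_mul, ← Real.exp_add, hβ]
    refine Real.exp_le_exp.2 ?_
    have h1 : (s.card : ℝ) * (t ^ 2 * B) ≤ t * (ε / 4) * K := by
      have h2 : (0:ℝ) ≤ (s.card : ℝ) := Nat.cast_nonneg _
      have h3 : (s.card : ℝ) * (t ^ 2 * B) ≤ K * (t ^ 2 * B) :=
        mul_le_mul_of_nonneg_right hcard (by positivity)
      have h4 : K * (t ^ 2 * B) ≤ K * (t * (ε / 4)) := by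
        refine mul_le_mul_of_nonneg_left ?_ hK0
        calc t ^ 2 * B = t * (t * B) := by ring
          _ ≤ t * (ε / 4) := mul_le_mul_of_nonneg_left htB ht0.le
      calc (s.card : ℝ) * (t ^ 2 * B) ≤ K * (t * (ε / 4)) := h3.trans h4
        _ = t * (ε / 4) * K := by ring
    have h5 : 0 ≤ t * ε * K := by positivity
    nlinarith
  have hnegmeas : ∀ j, Measurable (fun ω => -X j ω) := fun j => (hmeas j).neg
  have hnegindep : iIndepFun (fun j => fun ω => -X j ω) ℙ :=
    hindep.comp (fun _ => fun x : ℝ => -x) (fun _ => measurable_neg)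
  have hnegident : ∀ j, IdentDistrib (fun ω => -X j ω) (fun ω => -X 0 ω) ℙ ℙ :=
    fun j => (hident j).comp measurable_neg
  have two_tails : ∀ (s : Finset ℕ) (W : Set Ω), ((s.card : ℝ) ≤ K) →
      W ⊆ {ω | ε * K ≤ ∑ j ∈ s, X j ω} ∪ {ω | ε * K ≤ ∑ j ∈ s, (fun ω => -X j ω) ω} →
      (ℙ W).toReal ≤ 2 * β := by
    intro s W hcard hsub
    have t1 := tail X hmeas hindep hident hintP hmgfP s hcard
    have t2 := tail (fun j => fun ω => -X j ω) hnegmeas hnegindep hnegident hintN hmgfN s hcard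
    have hle : ℙ W ≤ ℙ {ω | ε * K ≤ ∑ j ∈ s, X j ω}
        + ℙ {ω | ε * K ≤ ∑ j ∈ s, (fun ω => -X j ω) ω} :=
      (measure_mono hsub).trans (measure_union_le _ _)
    calc (ℙ W).toReal
        ≤ (ℙ {ω | ε * K ≤ ∑ j ∈ s, X j ω}
            + ℙ {ω | ε * K ≤ ∑ j ∈ s, (fun ω => -X j ω) ω}).toReal :=
          ENNReal.toReal_mono
            (ENNReal.add_ne_top.2 ⟨measure_ne_top _ _, measure_ne_top _ _⟩) hle
      _ = (ℙ {ω | ε * K ≤ ∑ j ∈ s, X j ω}).toReal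
            + (ℙ {ω | ε * K ≤ ∑ j ∈ s, (fun ω => -X j ω) ω}).toReal :=
          ENNReal.toReal_add (measure_ne_top _ _) (measure_ne_top _ _)
      _ ≤ β + β := add_le_add t1 t2
      _ = 2 * β := by ring
  -- per-index bound
  have hAi : ∀ i : ℕ,
      (ℙ {ω | |(i : ℝ) - (n : ℝ)| ≤ K ∧ ε * K ≤ |S i ω - S n ω|}).toReal ≤ 2 * β := by
    intro i
    by_cases hw : |(i : ℝ) - (n : ℝ)| ≤ K
    · rcases le_total n i with hni | hin
      · refine two_tails (Finset.Ico n i) _ ?_ ?_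
        · rw [Nat.card_Ico, Nat.cast_sub hni]
          exact (abs_le.1 hw).2
        · rintro ω ⟨-, habs⟩
          have hdiff : S i ω - S n ω = ∑ j ∈ Finset.Ico n i, X j ω := by
            rw [hS, hS, Finset.sum_Ico_eq_sub _ hni]
          rcases le_abs.1 habs with h | h
          · exact Or.inl (by rw [Set.mem_setOf_eq, ← hdiff]; exact h)
          · refine Or.inr ?_
            rw [Set.mem_setOf_eq]
            have h2 : -(S i ω - S n ω) = ∑ j ∈ Finset.Ico n i, -X j ω := by
              rw [hdiff, ← Finset.sum_neg_distrib]
            rw [show (∑ j ∈ Finset.Ico n i, (fun ω => -X j ω) ω) = ∑ j ∈ Finset.Ico n i, -X j ω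
              from rfl, ← h2]
            exact h
      · refine two_tails (Finset.Ico i n) _ ?_ ?_
        · rw [Nat.card_Ico, Nat.cast_sub hin]
          have := (abs_le.1 hw).1; linarith
        · rintro ω ⟨-, habs⟩
          have hdiff : S n ω - S i ω = ∑ j ∈ Finset.Ico i n, X j ω := by
            rw [hS, hS, Finset.sum_Ico_eq_sub _ hin]
          rcases le_abs.1 habs with h | h
          · refine Or.inr ?_
            rw [Set.mem_setOf_eq]
            have h2 : S i ω - S n ω = ∑ j ∈ Finset.Ico i n, -X j ω := by
              rw [Finset.sum_neg_distrib, ← hdiff]; ring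
            rw [show (∑ j ∈ Finset.Ico i n, (fun ω => -X j ω) ω) = ∑ j ∈ Finset.Ico i n, -X j ω
              from rfl, ← h2]
            exact h
          · exact Or.inl (by rw [Set.mem_setOf_eq, ← hdiff]; linarith)
    · have hempty : {ω | |(i : ℝ) - (n : ℝ)| ≤ K ∧ ε * K ≤ |S i ω - S n ω|} = (∅ : Set Ω) := by
        ext ω; simp only [Set.mem_setOf_eq, Set.mem_empty_iff_false, iff_false]
        exact fun h => hw h.1
      rw [hempty]
      simp [hβ0.le]
  -- subset of a finite union
  have hsub : {ω | sSup {x : ℝ | ∃ i : ℕ, |(i : ℝ) - (n : ℝ)| ≤ K ∧ x = |S i ω - S n ω|} ≥ ε * K}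
      ⊆ ⋃ i ∈ Finset.range (N + 1),
        {ω | |(i : ℝ) - (n : ℝ)| ≤ K ∧ ε * K ≤ |S i ω - S n ω|} := by
    intro ω hω
    set T := {x : ℝ | ∃ i : ℕ, |(i : ℝ) - (n : ℝ)| ≤ K ∧ x = |S i ω - S n ω|} with hT
    have hidx : ∀ i : ℕ, |(i : ℝ) - (n : ℝ)| ≤ K → i ≤ N := by
      intro i hi
      have h1 : (i : ℝ) - (n : ℝ) ≤ K := (abs_le.1 hi).2
      have h2 : (i : ℝ) ≤ (n : ℝ) + (⌈K⌉₊ : ℝ) := by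
        have := Nat.le_ceil K; linarith
      have h3 : (i : ℝ) ≤ ((n + ⌈K⌉₊ : ℕ) : ℝ) := by push_cast; linarith
      exact_mod_cast h3
    have hTim : T = (fun i : ℕ => |S i ω - S n ω|) '' {i : ℕ | |(i : ℝ) - (n : ℝ)| ≤ K} := by
      ext x
      constructor
      · rintro ⟨i, hi, rfl⟩; exact ⟨i, hi, rfl⟩
      · rintro ⟨i, hi, rfl⟩; exact ⟨i, hi, rfl⟩
    have hfin : T.Finite := by
      rw [hTim]
      refine Set.Finite.image _ (Set.Finite.subset (Set.finite_Iic N) ?_)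
      intro i hi
      exact hidx i hi
    have hne : T.Nonempty := ⟨|S n ω - S n ω|, n, by simpa using hK0, rfl⟩
    obtain ⟨i, hiw, hieq⟩ := hne.csSup_mem hfin
    refine Set.mem_biUnion (Finset.mem_range.2 (Nat.lt_succ_of_le (hidx i hiw))) ?_
    exact ⟨hiw, by rw [← hieq]; exact hω⟩
  -- assemble
  have hPE : ℙ {ω | sSup {x : ℝ | ∃ i : ℕ, |(i : ℝ) - (n : ℝ)| ≤ K ∧ x = |S i ω - S n ω|} ≥ ε * K}
      ≤ ∑ i ∈ Finset.range (N + 1),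
        ℙ {ω | |(i : ℝ) - (n : ℝ)| ≤ K ∧ ε * K ≤ |S i ω - S n ω|} :=
    (measure_mono hsub).trans (measure_biUnion_finset_le _ _)
  have hfin2 : (∑ i ∈ Finset.range (N + 1),
      ℙ {ω | |(i : ℝ) - (n : ℝ)| ≤ K ∧ ε * K ≤ |S i ω - S n ω|}) ≠ ⊤ := by
    refine (ENNReal.sum_lt_top.2 fun i _ => ?_).ne
    exact measure_lt_top _ _
  calc (ℙ {ω | sSup {x : ℝ | ∃ i : ℕ, |(i : ℝ) - (n : ℝ)| ≤ K ∧ x = |S i ω - S n ω|}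
          ≥ ε * K}).toReal
      ≤ (∑ i ∈ Finset.range (N + 1),
          ℙ {ω | |(i : ℝ) - (n : ℝ)| ≤ K ∧ ε * K ≤ |S i ω - S n ω|}).toReal :=
        ENNReal.toReal_mono hfin2 hPE
    _ = ∑ i ∈ Finset.range (N + 1),
          (ℙ {ω | |(i : ℝ) - (n : ℝ)| ≤ K ∧ ε * K ≤ |S i ω - S n ω|}).toReal :=
        ENNReal.toReal_sum fun i _ => measure_ne_top _ _
    _ ≤ ∑ _i ∈ Finset.range (N + 1), 2 * β := Finset.sum_le_sum fun i _ => hAi i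
    _ = ((N : ℝ) + 1) * (2 * β) := by
        rw [Finset.sum_const, Finset.card_range, nsmul_eq_mul]; push_cast; ring
    _ ≤ ((n : ℝ) + K + 2) * (2 * β) := by
        have h1 : ((N : ℕ) : ℝ) + 1 ≤ (n : ℝ) + K + 2 := by
          have h2 : (⌈K⌉₊ : ℝ) < K + 1 := Nat.ceil_lt_add_one hK0
          rw [hN]; push_cast; linarith
        exact mul_le_mul_of_nonneg_right h1 (by positivity)

lemma summable_glue (M t ε : ℝ) (hM : 0 < M) (ht0 : 0 < t) (hε : 0 < ε)
    (k : ℕ → ℝ) (hk : ∀ n : ℕ, k n = M * Real.sqrt (n * Real.log (Real.log n)))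
    (f : ℕ → ℝ) (hf0 : ∀ n, 0 ≤ f n)
    (key : ∀ n : ℕ, 1 ≤ Real.log (Real.log n) →
      f n ≤ ((n : ℝ) + k n + 2) * (2 * Real.exp (-(t * ε / 2) * k n))) :
    Summable f := by
  set d := t * ε / 2 * M with hd
  have hd0 : 0 < d := by positivity
  have hexp3 : Real.exp 3 < 21 := by
    have h1 := Real.exp_one_lt_d9
    have h2 : Real.exp 3 = Real.exp 1 ^ 3 := by
      rw [← Real.exp_nat_mul]; norm_num
    rw [h2]
    have h3 : Real.exp 1 ^ 3 < 2.7182818286 ^ 3 := by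
      gcongr
    nlinarith
  have hlog : ∀ n : ℕ, 21 ≤ n → 1 ≤ Real.log (Real.log n) := by
    intro n hn
    have hn0 : (21 : ℝ) ≤ (n : ℝ) := by exact_mod_cast hn
    have h3 : (3 : ℝ) ≤ Real.log 21 := (Real.le_log_iff_exp_le (by norm_num)).2 hexp3.le
    have h4 : Real.log 21 ≤ Real.log n := Real.log_le_log (by norm_num) hn0
    have h5 : (3 : ℝ) ≤ Real.log n := h3.trans h4
    refine (Real.le_log_iff_exp_le (by linarith)).2 ?_
    have := Real.exp_one_lt_d9
    linarith
  have hlogn : ∀ n : ℕ, 21 ≤ n → Real.log (Real.log n) ≤ (n : ℝ) := by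
    intro n hn
    have hn0 : (21 : ℝ) ≤ (n : ℝ) := by exact_mod_cast hn
    have h3 : (3 : ℝ) ≤ Real.log 21 := (Real.le_log_iff_exp_le (by norm_num)).2 hexp3.le
    have h5 : (3 : ℝ) ≤ Real.log n := h3.trans (Real.log_le_log (by norm_num) hn0)
    have h6 : Real.log (Real.log n) ≤ Real.log n := Real.log_le_self (by linarith)
    have h7 : Real.log n ≤ (n : ℝ) := Real.log_le_self (by linarith)
    linarith
  have hkub : ∀ n : ℕ, 21 ≤ n → M * Real.sqrt n ≤ k n ∧ k n ≤ M * n := by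
    intro n hn
    have hn0 : (21 : ℝ) ≤ (n : ℝ) := by exact_mod_cast hn
    have h1 := hlog n hn
    have h2 := hlogn n hn
    constructor
    · rw [hk]
      refine mul_le_mul_of_nonneg_left ?_ hM.le
      refine Real.sqrt_le_sqrt ?_
      nlinarith
    · rw [hk]
      have h3 : Real.sqrt ((n : ℝ) * Real.log (Real.log n)) ≤ Real.sqrt ((n : ℝ) * n) :=
        Real.sqrt_le_sqrt (by nlinarith)
      have h4 : Real.sqrt ((n : ℝ) * n) = (n : ℝ) := Real.sqrt_mul_self (by linarith)
      refine mul_le_mul_of_nonneg_left (h3.trans_eq h4) hM.le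
  set C := 2 * (M + 3) * 3628800 / d ^ 10 with hC
  have hC0 : 0 < C := by positivity
  have hcmp : ∀ n : ℕ, 21 ≤ n → f n ≤ C / (n : ℝ) ^ 2 := by
    intro n hn
    have hn0 : (21 : ℝ) ≤ (n : ℝ) := by exact_mod_cast hn
    have hn1 : (1 : ℝ) ≤ (n : ℝ) := by linarith
    obtain ⟨hklb, hkub'⟩ := hkub n hn
    have hkn0 : 0 ≤ k n := by
      have : 0 ≤ M * Real.sqrt n := by positivity
      linarith
    have hsq : (0:ℝ) < Real.sqrt n := Real.sqrt_pos.2 (by linarith)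
    set x := d * Real.sqrt n with hx
    have hx0 : 0 < x := by positivity
    -- exp lower bound
    have hfact : ((Nat.factorial 10 : ℕ) : ℝ) = 3628800 := by norm_num [Nat.factorial]
    have hxexp : x ^ 10 / 3628800 ≤ Real.exp x := by
      have h1 := Real.sum_le_exp_of_nonneg hx0.le 11
      have h2 : x ^ 10 / ((Nat.factorial 10 : ℕ) : ℝ)
          ≤ ∑ i ∈ Finset.range 11, x ^ i / ((Nat.factorial i : ℕ) : ℝ) := by
        refine Finset.single_le_sum (f := fun i => x ^ i / ((Nat.factorial i : ℕ) : ℝ)) ?_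
          (by norm_num)
        intro i _
        positivity
      rw [hfact] at h2
      exact h2.trans h1
    have hexpneg : Real.exp (-x) ≤ 3628800 / x ^ 10 := by
      rw [Real.exp_neg]
      rw [inv_le_iff_one_le_mul₀ (Real.exp_pos x)]
      have h3 : x ^ 10 ≤ Real.exp x * 3628800 := (div_le_iff₀ (by norm_num)).1 hxexp
      rw [div_mul_eq_mul_div, le_div_iff₀ (by positivity), one_mul]
      linarith
    -- combine
    have hb1 : (n : ℝ) + k n + 2 ≤ (M + 3) * n := by nlinarith
    have hb2 : Real.exp (-(t * ε / 2) * k n) ≤ Real.exp (-x) := by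
      refine Real.exp_le_exp.2 ?_
      rw [hx, hd]
      nlinarith [mul_le_mul_of_nonneg_left hklb (by positivity : (0:ℝ) ≤ t * ε / 2)]
    have hx10 : x ^ 10 = d ^ 10 * (n : ℝ) ^ 5 := by
      rw [hx, mul_pow]
      congr 1
      rw [show (10 : ℕ) = 2 * 5 by norm_num, pow_mul, Real.sq_sqrt (by linarith : (0:ℝ) ≤ (n:ℝ))]
    have hb3 : Real.exp (-x) ≤ 3628800 / (d ^ 10 * (n : ℝ) ^ 5) := by
      rw [← hx10]; exact hexpneg
    have hchain : f n ≤ (M + 3) * n * (2 * (3628800 / (d ^ 10 * (n : ℝ) ^ 5))) := by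
      refine (key n (hlog n hn)).trans ?_
      have e1 : Real.exp (-(t * ε / 2) * k n) ≤ 3628800 / (d ^ 10 * (n : ℝ) ^ 5) :=
        hb2.trans hb3
      have h2' : 2 * Real.exp (-(t * ε / 2) * k n) ≤ 2 * (3628800 / (d ^ 10 * (n : ℝ) ^ 5)) := by
        linarith
      refine mul_le_mul hb1 h2' (by positivity) (by positivity)
    refine hchain.trans ?_
    have hg : (M + 3) * (n:ℝ) * (2 * (3628800 / (d ^ 10 * (n : ℝ) ^ 5)))
        = C * ((n:ℝ) / (n:ℝ) ^ 5) := by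
      rw [hC]; field_simp
    have h35 : (n:ℝ) ^ 3 ≤ (n:ℝ) ^ 5 := by
      gcongr
      · norm_num
    have h10 : (n:ℝ) / (n:ℝ) ^ 5 ≤ 1 / (n:ℝ) ^ 2 := by
      rw [div_le_div_iff₀ (by positivity) (by positivity)]
      calc (n:ℝ) * (n:ℝ) ^ 2 = (n:ℝ) ^ 3 := by ring
        _ ≤ (n:ℝ) ^ 5 := h35
        _ = 1 * (n:ℝ) ^ 5 := by ring
    calc (M + 3) * (n:ℝ) * (2 * (3628800 / (d ^ 10 * (n : ℝ) ^ 5)))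
        = C * ((n:ℝ) / (n:ℝ) ^ 5) := hg
      _ ≤ C * (1 / (n:ℝ) ^ 2) := mul_le_mul_of_nonneg_left h10 hC0.le
      _ = C / (n:ℝ) ^ 2 := by ring
  -- summability
  refine (summable_nat_add_iff 21).1 ?_
  have hsummable : Summable (fun n : ℕ => C * (1 / ((n + 21 : ℕ) : ℝ) ^ 2)) := by
    refine Summable.mul_left C ?_
    exact (summable_nat_add_iff (f := fun n : ℕ => 1 / (n : ℝ) ^ 2) 21).2
      (Real.summable_one_div_nat_pow.2 (by norm_num))
  refine Summable.of_nonneg_of_le (fun n => hf0 _) (fun n => ?_) hsummable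
  have h1 := hcmp (n + 21) (by omega)
  rw [mul_one_div]
  exact_mod_cast h1


theorem stmt_1
    {Ω : Type*} [MeasureSpace Ω] [IsProbabilityMeasure (ℙ : Measure Ω)]
    (X : ℕ → Ω → ℝ)
    (hmeas : ∀ i, Measurable (X i))
    (hindep : iIndepFun X ℙ)
    (hident : ∀ i, IdentDistrib (X i) (X 0) ℙ ℙ)
    (hmean : ∫ ω, X 0 ω = 0)
    (hexp : ∃ c > 0, Integrable (fun ω => Real.exp (c * |X 0 ω|)))
    (M : ℝ) (hM : 0 < M)
    (S : ℕ → Ω → ℝ) (hS : ∀ n ω, S n ω = ∑ i ∈ Finset.range n, X i ω)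
    (k : ℕ → ℝ) (hk : ∀ n : ℕ, k n = M * Real.sqrt (n * Real.log (Real.log n)))
    (hLDP : ∀ ε > (0 : ℝ), ∃ c > (0 : ℝ), ∀ᶠ n : ℕ in atTop,
      (ℙ {ω | |S n ω| ≥ ε * n}).toReal ≤ Real.exp (-c * n)) :
    ∀ ε > (0 : ℝ), Summable (fun n : ℕ =>
      (ℙ {ω | sSup {x : ℝ | ∃ i : ℕ, |(i : ℝ) - (n : ℝ)| ≤ k n ∧ x = |S i ω - S n ω|}
        ≥ ε * k n}).toReal) := by
  intro ε hε
  obtain ⟨c, hc, hintc⟩ := hexp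
  have hX0 := hmeas 0
  -- integrability of exp(t * X 0) for |t| ≤ c
  have hIexp : ∀ t : ℝ, |t| ≤ c → Integrable (fun ω => Real.exp (t * X 0 ω)) ℙ := by
    intro t htc
    refine hintc.mono' ((Real.measurable_exp.comp (hX0.const_mul t)).aestronglyMeasurable) ?_
    filter_upwards with ω
    rw [Real.norm_eq_abs, Real.abs_exp]
    refine Real.exp_le_exp.2 ?_
    calc t * X 0 ω ≤ |t * X 0 ω| := le_abs_self _
      _ = |t| * |X 0 ω| := abs_mul _ _
      _ ≤ c * |X 0 ω| := mul_le_mul_of_nonneg_right htc (abs_nonneg _)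
  -- integrability of X 0
  have hIX : Integrable (X 0) ℙ := by
    refine (hintc.const_mul c⁻¹).mono' hX0.aestronglyMeasurable ?_
    filter_upwards with ω
    rw [Real.norm_eq_abs]
    have h1 : c * |X 0 ω| ≤ Real.exp (c * |X 0 ω|) := by
      have := Real.add_one_le_exp (c * |X 0 ω|); linarith
    rw [show c⁻¹ * Real.exp (c * |X 0 ω|) = Real.exp (c * |X 0 ω|) / c by ring]
    rw [le_div_iff₀ hc]
    linarith
  -- integrability of X² exp((c/2)|X|)
  have hIsq : Integrable (fun ω => (X 0 ω) ^ 2 * Real.exp (c / 2 * |X 0 ω|)) ℙ := by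
    refine (hintc.const_mul (16 / c ^ 2)).mono'
      (((hX0.pow_const 2).mul (Real.measurable_exp.comp (hX0.abs.const_mul (c / 2)))).aestronglyMeasurable) ?_
    filter_upwards with ω
    rw [Real.norm_eq_abs]
    set x := |X 0 ω| with hx
    have hx0 : 0 ≤ x := abs_nonneg _
    have h2 : c / 2 * x / 2 + 1 ≤ Real.exp (c / 2 * x / 2) := Real.add_one_le_exp _
    have h3 : (c / 2 * x / 2) ^ 2 ≤ Real.exp (c / 2 * x) := by
      have := Real.exp_pos (c / 2 * x / 2)
      have hsq : Real.exp (c / 2 * x / 2) * Real.exp (c / 2 * x / 2) = Real.exp (c / 2 * x) := by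
        rw [← Real.exp_add]; ring_nf
      have hy0 : (0:ℝ) ≤ c / 2 * x / 2 := by positivity
      have hyE : c / 2 * x / 2 ≤ Real.exp (c / 2 * x / 2) := by linarith
      nlinarith [mul_nonneg hy0 (sub_nonneg.2 hyE),
        mul_nonneg (Real.exp_pos (c / 2 * x / 2)).le (sub_nonneg.2 hyE)]
    have h4 : (X 0 ω) ^ 2 ≤ 16 / c ^ 2 * Real.exp (c / 2 * x) := by
      have hxx : (X 0 ω) ^ 2 = x ^ 2 := (sq_abs _).symm
      rw [hxx, div_mul_eq_mul_div, le_div_iff₀ (by positivity)]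
      nlinarith
    have h5 : Real.exp (c / 2 * x) * Real.exp (c / 2 * x) = Real.exp (c * x) := by
      rw [← Real.exp_add]; ring_nf
    have habs : |(X 0 ω) ^ 2 * Real.exp (c / 2 * x)| = (X 0 ω) ^ 2 * Real.exp (c / 2 * x) :=
      abs_of_nonneg (mul_nonneg (sq_nonneg _) (Real.exp_pos _).le)
    rw [habs]
    calc (X 0 ω) ^ 2 * Real.exp (c / 2 * x)
        ≤ 16 / c ^ 2 * Real.exp (c / 2 * x) * Real.exp (c / 2 * x) := by
          exact mul_le_mul_of_nonneg_right h4 (Real.exp_pos _).le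
      _ = 16 / c ^ 2 * Real.exp (c * x) := by rw [mul_assoc, h5]
  -- B and the mgf bound
  set B := ∫ ω, (X 0 ω) ^ 2 * Real.exp (c / 2 * |X 0 ω|) with hBdef
  have hB : 0 ≤ B :=
    integral_nonneg fun ω => mul_nonneg (sq_nonneg _) (Real.exp_pos _).le
  have hmgf : ∀ t : ℝ, |t| ≤ c / 2 → mgf (X 0) ℙ t ≤ Real.exp (t ^ 2 * B) := by
    intro t htle
    have h1 : Integrable (fun ω => Real.exp (t * X 0 ω)) ℙ := hIexp t (by linarith)
    have hptw : ∀ ω, Real.exp (t * X 0 ω)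
        ≤ 1 + t * X 0 ω + t ^ 2 * ((X 0 ω) ^ 2 * Real.exp (c / 2 * |X 0 ω|)) := by
      intro ω
      have hk1 := exp_le_one_add_sq (t * X 0 ω)
      have h2 : (t * X 0 ω) ^ 2 * Real.exp |t * X 0 ω|
          ≤ t ^ 2 * ((X 0 ω) ^ 2 * Real.exp (c / 2 * |X 0 ω|)) := by
        rw [mul_pow, abs_mul]
        have h3 : Real.exp (|t| * |X 0 ω|) ≤ Real.exp (c / 2 * |X 0 ω|) :=
          Real.exp_le_exp.2 (mul_le_mul_of_nonneg_right htle (abs_nonneg _))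
        calc t ^ 2 * (X 0 ω) ^ 2 * Real.exp (|t| * |X 0 ω|)
            ≤ t ^ 2 * (X 0 ω) ^ 2 * Real.exp (c / 2 * |X 0 ω|) := by
              exact mul_le_mul_of_nonneg_left h3 (mul_nonneg (sq_nonneg t) (sq_nonneg (X 0 ω)))
          _ = t ^ 2 * ((X 0 ω) ^ 2 * Real.exp (c / 2 * |X 0 ω|)) := by ring
      linarith
    have i0 : Integrable (fun ω => t * X 0 ω) ℙ := hIX.const_mul t
    have i1 : Integrable (fun ω => 1 + t * X 0 ω) ℙ := (integrable_const 1).add i0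
    have i2 : Integrable (fun ω => t ^ 2 * ((X 0 ω) ^ 2 * Real.exp (c / 2 * |X 0 ω|))) ℙ :=
      hIsq.const_mul (t ^ 2)
    have hrhs : Integrable
        (fun ω => 1 + t * X 0 ω + t ^ 2 * ((X 0 ω) ^ 2 * Real.exp (c / 2 * |X 0 ω|))) ℙ :=
      i1.add i2
    have hmono := integral_mono h1 hrhs hptw
    have heval : ∫ ω, (1 + t * X 0 ω + t ^ 2 * ((X 0 ω) ^ 2 * Real.exp (c / 2 * |X 0 ω|)))
        = 1 + t ^ 2 * B := by
      rw [integral_add i1 i2, integral_add (integrable_const 1) i0, integral_const,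
        integral_const_mul, integral_const_mul, hmean]
      simp [hBdef]
    calc mgf (X 0) ℙ t = ∫ ω, Real.exp (t * X 0 ω) := rfl
      _ ≤ 1 + t ^ 2 * B := by rw [← heval]; exact hmono
      _ ≤ Real.exp (t ^ 2 * B) := by have := Real.add_one_le_exp (t ^ 2 * B); linarith
  -- choose t
  set t := min (c / 2) (ε / (4 * (B + 1))) with htdef
  have ht0 : 0 < t := lt_min (by linarith) (by positivity)
  have htc : |t| ≤ c / 2 := by
    rw [abs_of_pos ht0]; exact min_le_left _ _
  have htB : t * B ≤ ε / 4 := by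
    have h1 : t * B ≤ ε / (4 * (B + 1)) * B :=
      mul_le_mul_of_nonneg_right (min_le_right _ _) hB
    have h2 : ε / (4 * (B + 1)) * B ≤ ε / 4 := by
      rw [div_mul_eq_mul_div, div_le_div_iff₀ (by positivity) (by norm_num)]
      nlinarith
    linarith
  have hmgfP : mgf (X 0) ℙ t ≤ Real.exp (t ^ 2 * B) := hmgf t htc
  have hmgfN : mgf (fun ω => -X 0 ω) ℙ t ≤ Real.exp (t ^ 2 * B) := by
    rw [show (fun ω : Ω => -X 0 ω) = -(X 0) from rfl, mgf_neg]
    have h1 : |(-t)| ≤ c / 2 := by rw [abs_neg]; exact htc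
    have h2 := hmgf (-t) h1
    calc mgf (X 0) ℙ (-t) ≤ Real.exp ((-t) ^ 2 * B) := h2
      _ = Real.exp (t ^ 2 * B) := by ring_nf
  have hintP : Integrable (fun ω => Real.exp (t * X 0 ω)) ℙ := hIexp t (by linarith)
  have hintN : Integrable (fun ω => Real.exp (t * -X 0 ω)) ℙ := by
    have h1 : |(-t)| ≤ c := by rw [abs_neg]; rw [abs_of_pos ht0] at htc ⊢; linarith
    have h2 := hIexp (-t) h1
    simpa [neg_mul, mul_neg] using h2
  have hK0 : ∀ n : ℕ, 0 ≤ k n := by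
    intro n; rw [hk]; positivity
  exact summable_glue M t ε hM ht0 hε k hk _ (fun n => ENNReal.toReal_nonneg)
    (fun n _ => key_bound X hmeas hindep hident S hS t B ε (k n) ht0 hB hε (hK0 n) htB
      hmgfP hmgfN hintP hintN n)
end

section
/- Let (S_n) be partial sums of i.i.d. centered real random variables with finite exponential moment, and let (τ_n) be random times with |τ_n − n| ≤ C√(n log log n) almost surely for all large n. Then almost surely |S_{τ_n} − S_n| / √(n log log n) → 0 as n → ∞. -/
open MeasureTheory ProbabilityTheory Filter
open scoped ENNReal

set_option linter.unusedSectionVars false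
set_option linter.unusedVariables false


lemma aux_exp_le_quad (y : ℝ) : Real.exp y ≤ 1 + y + y^2 * Real.exp |y| := by
  rcases le_total 0 y with hy | hy
  · rw [abs_of_nonneg hy]
    have h1 := Real.add_one_le_exp (-y)
    have h2 := Real.exp_pos y
    have h3 : Real.exp (-y) * Real.exp y = 1 := by
      rw [← Real.exp_add]; simp
    nlinarith [sq_nonneg y, mul_nonneg hy (Real.exp_pos y).le]
  · rw [abs_of_nonpos hy]
    have h1 := Real.add_one_le_exp (-y)
    have h2 := Real.exp_pos (-y)
    have h3 : Real.exp y * Real.exp (-y) = 1 := by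
      rw [← Real.exp_add]; simp
    have hE2 : (1:ℝ) ≤ Real.exp (-y) := by linarith
    rcases le_total (-1) y with hy1 | hy1
    · have hA : (1+y) * (1-y) ≤ (1+y) * Real.exp (-y) :=
        mul_le_mul_of_nonneg_left (by linarith) (by linarith)
      nlinarith [sq_nonneg y, mul_le_mul hE2 hE2 (by norm_num) (by positivity), h3, h2]
    · have hle1 : Real.exp y ≤ 1 := Real.exp_le_one_iff.mpr hy
      have hsq : y^2 * 1 ≤ y^2 * Real.exp (-y) :=
        mul_le_mul_of_nonneg_left hE2 (sq_nonneg y)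
      nlinarith [sq_nonneg y]

lemma aux_sq_le_exp (v : ℝ) (hv : 0 ≤ v) : v^2 / 4 ≤ Real.exp v := by
  have h1 := Real.add_one_le_exp (v/2)
  have h3 : Real.exp (v/2) * Real.exp (v/2) = Real.exp v := by
    rw [← Real.exp_add]; ring_nf
  nlinarith [Real.exp_pos (v/2)]

lemma aux_pow6_le_exp (v : ℝ) (hv : 0 ≤ v) : (v/6)^6 ≤ Real.exp v := by
  have h1 := Real.add_one_le_exp (v/6)
  have h2 : (Real.exp (v/6))^6 = Real.exp v := by
    rw [← Real.exp_nat_mul]; congr 1; push_cast; ring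
  calc (v/6)^6 ≤ (1 + v/6)^6 := by
        apply pow_le_pow_left₀ (by positivity); linarith
    _ ≤ (Real.exp (v/6))^6 := by apply pow_le_pow_left₀ (by positivity); linarith
    _ = Real.exp v := h2

lemma aux_abs_le_exp (c x : ℝ) (hc : 0 < c) : |x| ≤ (1/c) * Real.exp (c * |x|) := by
  have h := Real.add_one_le_exp (c * |x|)
  rw [one_div, inv_mul_eq_div, le_div_iff₀ hc, mul_comm]
  linarith

lemma aux_ev_sqrt (a : ℝ) : ∀ᶠ n : ℕ in atTop, a ≤ Real.sqrt n := by
  rcases le_or_gt a 0 with h | h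
  · exact Eventually.of_forall fun n => h.trans (Real.sqrt_nonneg _)
  · refine eventually_atTop.mpr ⟨⌈a^2⌉₊, fun n hn => ?_⟩
    rw [Real.le_sqrt h.le (by positivity)]
    calc a^2 ≤ (⌈a^2⌉₊ : ℝ) := Nat.le_ceil _
      _ ≤ n := Nat.cast_le.mpr hn

lemma aux_ev_loglog : ∀ᶠ n : ℕ in atTop, 1 ≤ Real.log (Real.log n) :=
  (Real.tendsto_log_atTop.comp (Real.tendsto_log_atTop.comp
    tendsto_natCast_atTop_atTop)).eventually_ge_atTop 1

lemma aux_summable {β : ℝ} (hβ : 0 < β) :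
    Summable (fun n : ℕ => 6 * n * Real.exp (-(β * Real.sqrt n))) := by
  have key : ∀ n : ℕ, 6 * n * Real.exp (-(β * Real.sqrt n)) ≤ (6 * 6^6 / β^6) * (1 / (n:ℝ)^2) := by
    intro n
    rcases Nat.eq_zero_or_pos n with rfl | hn
    · simp
    · have hn' : (0:ℝ) < n := by exact_mod_cast hn
      have hsq : (0:ℝ) < Real.sqrt n := Real.sqrt_pos.mpr hn'
      have h6 := aux_pow6_le_exp (β * Real.sqrt n) (by positivity)
      have hsq6 : (Real.sqrt n)^6 = (n:ℝ)^3 := by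
        have : (Real.sqrt n)^6 = ((Real.sqrt n)^2)^3 := by ring
        rw [this, Real.sq_sqrt hn'.le]
      have h2 : (β * Real.sqrt n / 6)^6 = β^6 * (n:ℝ)^3 / 6^6 := by
        rw [div_pow, mul_pow, hsq6]
      have hexp : Real.exp (-(β * Real.sqrt n)) ≤ 6^6 / (β^6 * (n:ℝ)^3) := by
        rw [Real.exp_neg]
        have hpos : (0:ℝ) < (β * Real.sqrt n / 6)^6 := by positivity
        calc (Real.exp (β * Real.sqrt n))⁻¹ ≤ ((β * Real.sqrt n / 6)^6)⁻¹ := by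
              exact inv_anti₀ hpos h6
          _ = 6^6 / (β^6 * (n:ℝ)^3) := by rw [h2]; field_simp
      calc 6 * (n:ℝ) * Real.exp (-(β * Real.sqrt n)) ≤ 6 * n * (6^6 / (β^6 * (n:ℝ)^3)) := by
            exact mul_le_mul_of_nonneg_left hexp (by positivity)
        _ = (6 * 6^6 / β^6) * (1 / (n:ℝ)^2) := by field_simp
  have hs0 : Summable (fun n : ℕ => 1 / (n:ℝ)^2) := by
    have := Real.summable_one_div_nat_pow (p := 2)
    exact this.mpr one_lt_two
  have hs : Summable (fun n : ℕ => (6 * 6^6 / β^6) * (1 / (n:ℝ)^2)) := hs0.mul_left _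

  exact Summable.of_nonneg_of_le (fun n => by positivity) key hs

section aux

variable {Ω : Type*} [MeasureSpace Ω] [IsProbabilityMeasure (ℙ : Measure Ω)]

lemma aux_int_exp_mul {Y : Ω → ℝ} (hm : Measurable Y) {c : ℝ} (hc : 0 < c)
    (hi : Integrable (fun ω => Real.exp (c * |Y ω|))) {t : ℝ} (ht : |t| ≤ c) :
    Integrable (fun ω => Real.exp (t * Y ω)) := by
  refine hi.mono (((hm.const_mul t).exp).aestronglyMeasurable) ?_
  filter_upwards with ω
  rw [Real.norm_eq_abs, Real.norm_eq_abs, abs_of_pos (Real.exp_pos _),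
    abs_of_pos (Real.exp_pos _), Real.exp_le_exp]
  calc t * Y ω ≤ |t * Y ω| := le_abs_self _
    _ = |t| * |Y ω| := abs_mul _ _
    _ ≤ c * |Y ω| := mul_le_mul_of_nonneg_right ht (abs_nonneg _)

lemma aux_int_Y {Y : Ω → ℝ} (hm : Measurable Y) {c : ℝ} (hc : 0 < c)
    (hi : Integrable (fun ω => Real.exp (c * |Y ω|))) : Integrable Y := by
  refine (hi.const_mul (1/c)).mono hm.aestronglyMeasurable ?_
  filter_upwards with ω
  rw [Real.norm_eq_abs, Real.norm_eq_abs]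
  have h := Real.add_one_le_exp (c * |Y ω|)
  have : |Y ω| ≤ 1/c * Real.exp (c * |Y ω|) := by
    rw [one_div, inv_mul_eq_div, le_div_iff₀ hc, mul_comm]; linarith
  exact this.trans (le_abs_self _)

lemma aux_one_le_M {Y : Ω → ℝ} {c : ℝ}
    (hi : Integrable (fun ω => Real.exp (c * |Y ω|))) (hc : 0 < c) :
    1 ≤ ∫ ω, Real.exp (c * |Y ω|) := by
  have h := integral_mono (integrable_const (1:ℝ)) hi
    (fun ω => Real.one_le_exp (by positivity))
  simpa using h

lemma aux_mgf_le {Y : Ω → ℝ} (hm : Measurable Y) (hmean : ∫ ω, Y ω = 0) {c : ℝ} (hc : 0 < c)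
    (hi : Integrable (fun ω => Real.exp (c * |Y ω|)))
    {t : ℝ} (ht : |t| ≤ c/2) :
    mgf Y ℙ t ≤ Real.exp ((16 / c^2 * ∫ ω, Real.exp (c * |Y ω|)) * t^2) := by
  have hpt : ∀ ω, Real.exp (t * Y ω) ≤ 1 + t * Y ω + 16 / c^2 * Real.exp (c * |Y ω|) * t^2 := by
    intro ω
    have e1 : Real.exp ((c/2) * |Y ω|) * Real.exp ((c/2) * |Y ω|) = Real.exp (c * |Y ω|) := by
      rw [← Real.exp_add]; ring_nf
    have habs : |t * Y ω| ≤ (c/2) * |Y ω| := by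
      rw [abs_mul]; exact mul_le_mul_of_nonneg_right ht (abs_nonneg _)
    have hB : Real.exp |t * Y ω| ≤ Real.exp ((c/2) * |Y ω|) := Real.exp_le_exp.2 habs
    have hY2 : (Y ω)^2 ≤ 16 / c^2 * Real.exp ((c/2) * |Y ω|) := by
      have h := aux_sq_le_exp ((c/2) * |Y ω|) (by positivity)
      have h2 : ((c/2) * |Y ω|)^2 = c^2 * (Y ω)^2 / 4 := by
        rw [mul_pow, sq_abs]; ring
      rw [h2] at h
      rw [div_mul_eq_mul_div, le_div_iff₀ (by positivity)]
      nlinarith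
    have step : (t * Y ω)^2 * Real.exp |t * Y ω| ≤ 16 / c^2 * Real.exp (c * |Y ω|) * t^2 := by
      calc (t * Y ω)^2 * Real.exp |t * Y ω| = t^2 * ((Y ω)^2 * Real.exp |t * Y ω|) := by ring
        _ ≤ t^2 * ((16 / c^2 * Real.exp ((c/2) * |Y ω|)) * Real.exp ((c/2) * |Y ω|)) := by
            refine mul_le_mul_of_nonneg_left ?_ (sq_nonneg t)
            exact mul_le_mul hY2 hB (Real.exp_pos _).le (by positivity)
        _ = 16 / c^2 * (Real.exp ((c/2) * |Y ω|) * Real.exp ((c/2) * |Y ω|)) * t^2 := by ring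
        _ = 16 / c^2 * Real.exp (c * |Y ω|) * t^2 := by rw [e1]
    have h0 := aux_exp_le_quad (t * Y ω)
    linarith
  have hintY : Integrable Y := aux_int_Y hm hc hi
  have hrhs : Integrable (fun ω => 1 + t * Y ω + 16 / c^2 * Real.exp (c * |Y ω|) * t^2) :=
    ((integrable_const (1:ℝ)).add (hintY.const_mul t)).add ((hi.const_mul _).mul_const _)
  have hmono : mgf Y ℙ t ≤ ∫ ω, (1 + t * Y ω + 16 / c^2 * Real.exp (c * |Y ω|) * t^2) := by
    have hint : Integrable (fun ω => Real.exp (t * Y ω)) :=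
      aux_int_exp_mul hm hc hi (ht.trans (by linarith))
    exact integral_mono hint hrhs hpt
  have hf : Integrable (fun ω => 1 + t * Y ω) (ℙ : Measure Ω) := by
    exact (integrable_const (1:ℝ)).add (hintY.const_mul t)
  have hg : Integrable (fun ω => 16 / c^2 * Real.exp (c * |Y ω|) * t^2) (ℙ : Measure Ω) := by
    exact (hi.const_mul _).mul_const _
  have hcalc : ∫ ω, (1 + t * Y ω + 16 / c^2 * Real.exp (c * |Y ω|) * t^2) =
      1 + (16 / c^2 * ∫ ω, Real.exp (c * |Y ω|)) * t^2 := by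
    rw [integral_add hf hg,
      integral_add (integrable_const (1:ℝ)) (hintY.const_mul t),
      integral_const]
    rw [integral_mul_const, integral_const_mul, integral_const_mul, hmean]
    simp
  rw [hcalc] at hmono
  exact hmono.trans (by linarith [Real.add_one_le_exp ((16 / c^2 * ∫ ω, Real.exp (c * |Y ω|)) * t^2)])

end aux

section aux2
variable {Ω : Type*} [MeasureSpace Ω] [IsProbabilityMeasure (ℙ : Measure Ω)]

lemma aux_block_tail (X : ℕ → Ω → ℝ) (hmeas : ∀ i, Measurable (X i))
    (hindep : iIndepFun X ℙ)
    (hident : ∀ i, IdentDistrib (X i) (X 0) ℙ ℙ)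
    {c : ℝ} (hc : 0 < c) (hi : Integrable (fun ω => Real.exp (c * |X 0 ω|)))
    (hmean : ∫ ω, X 0 ω = 0)
    {t : ℝ} (ht0 : 0 < t) (htc : t ≤ c/2) (a b : ℕ) (r : ℝ) :
    ℙ {ω | r ≤ |∑ i ∈ Finset.Ico a b, X i ω|} ≤
      ENNReal.ofReal (2 * Real.exp (-t * r +
        (b - a : ℕ) * ((16 / c^2 * ∫ ω, Real.exp (c * |X 0 ω|)) * t^2))) := by
  set M : ℝ := 16 / c^2 * ∫ ω, Real.exp (c * |X 0 ω|) with hM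
  have hexpid : ∀ (i : ℕ) (s : ℝ), IdentDistrib (fun ω => Real.exp (s * X i ω))
      (fun ω => Real.exp (s * X 0 ω)) ℙ ℙ := fun i s =>
    (hident i).comp (Real.measurable_exp.comp (measurable_const_mul s))
  have hint_i : ∀ (i : ℕ) (s : ℝ), |s| ≤ c →
      Integrable (fun ω => Real.exp (s * X i ω)) (ℙ : Measure Ω) := fun i s hs =>
    (hexpid i s).integrable_iff.mpr (aux_int_exp_mul (hmeas 0) hc hi hs)
  have hmgf_i : ∀ (i : ℕ) (s : ℝ), mgf (X i) ℙ s = mgf (X 0) ℙ s := fun i s =>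
    (hexpid i s).integral_eq
  set T : Ω → ℝ := ∑ i ∈ Finset.Ico a b, X i with hT
  have hTapp : ∀ ω, T ω = ∑ i ∈ Finset.Ico a b, X i ω := fun ω => Finset.sum_apply ω _ _
  have htabs : |t| ≤ c/2 := by rw [abs_of_pos ht0]; exact htc
  have hntabs : |(-t)| ≤ c/2 := by rwa [abs_neg]
  have hcard : (Finset.Ico a b).card = b - a := Nat.card_Ico a b
  have hmgfT : ∀ s : ℝ, |s| ≤ c/2 → s^2 = t^2 →
      mgf T ℙ s ≤ Real.exp ((b - a : ℕ) * (M * t^2)) := by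
    intro s hs hs2
    rw [hT, hindep.mgf_sum hmeas]
    calc ∏ i ∈ Finset.Ico a b, mgf (X i) ℙ s
        = (mgf (X 0) ℙ s) ^ (b - a) := by
          rw [Finset.prod_congr rfl fun i _ => hmgf_i i s, Finset.prod_const, hcard]
      _ ≤ (Real.exp (M * s^2)) ^ (b - a) :=
          pow_le_pow_left₀ mgf_nonneg (aux_mgf_le (hmeas 0) hmean hc hi hs) _
      _ = Real.exp ((b - a : ℕ) * (M * s^2)) := by rw [← Real.exp_nat_mul]
      _ = Real.exp ((b - a : ℕ) * (M * t^2)) := by rw [hs2]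
  have hintT : Integrable (fun ω => Real.exp (t * T ω)) (ℙ : Measure Ω) := by
    rw [hT]
    exact hindep.integrable_exp_mul_sum hmeas
      (fun i _ => hint_i i t (htabs.trans (by linarith)))
  have hintnT : Integrable (fun ω => Real.exp (t * (-T) ω)) (ℙ : Measure Ω) := by
    have : Integrable (fun ω => Real.exp ((-t) * T ω)) (ℙ : Measure Ω) := by
      rw [hT]
      exact hindep.integrable_exp_mul_sum hmeas
        (fun i _ => hint_i i (-t) (hntabs.trans (by linarith)))
    refine this.congr (Filter.Eventually.of_forall fun ω => ?_)
    simp [Pi.neg_apply, mul_comm, neg_mul, mul_neg]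
  -- upper tail
  have hup : (ℙ {ω | r ≤ T ω}).toReal ≤ Real.exp (-t * r + (b - a : ℕ) * (M * t^2)) := by
    refine (measure_ge_le_exp_mul_mgf r ht0.le hintT).trans ?_
    rw [Real.exp_add]
    exact mul_le_mul_of_nonneg_left (hmgfT t htabs rfl) (Real.exp_pos _).le
  have hdown : (ℙ {ω | r ≤ (-T) ω}).toReal ≤ Real.exp (-t * r + (b - a : ℕ) * (M * t^2)) := by
    refine (measure_ge_le_exp_mul_mgf r ht0.le hintnT).trans ?_
    rw [Real.exp_add, mgf_neg]
    exact mul_le_mul_of_nonneg_left (hmgfT (-t) hntabs (by ring)) (Real.exp_pos _).le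
  set B : ℝ := Real.exp (-t * r + (b - a : ℕ) * (M * t^2)) with hB
  have hBpos : 0 < B := Real.exp_pos _
  have h1 : ℙ {ω | r ≤ T ω} ≤ ENNReal.ofReal B :=
    (ENNReal.le_ofReal_iff_toReal_le (measure_ne_top _ _) hBpos.le).mpr hup
  have h2 : ℙ {ω | r ≤ (-T) ω} ≤ ENNReal.ofReal B :=
    (ENNReal.le_ofReal_iff_toReal_le (measure_ne_top _ _) hBpos.le).mpr hdown
  have hsub : {ω | r ≤ |∑ i ∈ Finset.Ico a b, X i ω|} ⊆
      {ω | r ≤ T ω} ∪ {ω | r ≤ (-T) ω} := by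
    intro ω hω
    simp only [Set.mem_setOf_eq] at hω
    rcases le_abs.mp hω with h | h
    · left; rw [Set.mem_setOf_eq, hTapp]; exact h
    · right; rw [Set.mem_setOf_eq, Pi.neg_apply, hTapp]; exact h
  calc ℙ {ω | r ≤ |∑ i ∈ Finset.Ico a b, X i ω|}
      ≤ ℙ ({ω | r ≤ T ω} ∪ {ω | r ≤ (-T) ω}) := measure_mono hsub
    _ ≤ ℙ {ω | r ≤ T ω} + ℙ {ω | r ≤ (-T) ω} := measure_union_le _ _
    _ ≤ ENNReal.ofReal B + ENNReal.ofReal B := add_le_add h1 h2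
    _ = ENNReal.ofReal (2 * B) := by
        rw [← ENNReal.ofReal_add hBpos.le hBpos.le]; ring_nf

end aux2

theorem stmt_14
    {Ω : Type*} [MeasureSpace Ω] [IsProbabilityMeasure (ℙ : Measure Ω)]
    (X : ℕ → Ω → ℝ)
    (hmeas : ∀ i, Measurable (X i))
    (hindep : iIndepFun X ℙ)
    (hident : ∀ i, IdentDistrib (X i) (X 0) ℙ ℙ)
    (hmean : ∫ ω, X 0 ω = 0)
    (hexp : ∃ c > (0 : ℝ), Integrable (fun ω => Real.exp (c * |X 0 ω|)))
    (S : ℕ → Ω → ℝ) (hS : ∀ n ω, S n ω = ∑ i ∈ Finset.range n, X i ω)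
    (τ : ℕ → Ω → ℕ) (C : ℝ) (hC : 0 < C)
    (hτ : ∀ᵐ ω, ∀ᶠ n : ℕ in atTop,
      |(τ n ω : ℝ) - n| ≤ C * Real.sqrt (n * Real.log (Real.log n))) :
    ∀ᵐ ω, Tendsto
      (fun n : ℕ => |S (τ n ω) ω - S n ω| / Real.sqrt (n * Real.log (Real.log n)))
      atTop (nhds 0) := by
  obtain ⟨c, hc, hci⟩ := hexp
  set I : ℝ := ∫ ω, Real.exp (c * |X 0 ω|) with hIdef
  have hI1 : 1 ≤ I := aux_one_le_M hci hc
  set M : ℝ := 16 / c^2 * I with hMdef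
  have hMpos : 0 < M := mul_pos (by positivity) (lt_of_lt_of_le one_pos hI1)
  set sq : ℕ → ℝ := fun n => Real.sqrt (n * Real.log (Real.log n)) with hsqdef
  set K : ℕ → ℕ := fun n => ⌈C * sq n⌉₊ with hKdef
  have key : ∀ k : ℕ, ∀ᵐ ω, ∀ᶠ n : ℕ in atTop, ∀ m ∈ Finset.Icc (n - K n) (n + K n),
      |∑ i ∈ Finset.Ico (min m n) (max m n), X i ω| < (1 / (k+1 : ℝ)) * sq n := by
    intro k
    set ε : ℝ := 1 / (k+1 : ℝ) with hεdef
    have hε : 0 < ε := by positivity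
    set t : ℝ := min (c/2) (ε / (4 * C * M)) with htdef
    have ht0 : 0 < t := lt_min (by positivity) (by positivity)
    have htc : t ≤ c/2 := min_le_left _ _
    have htε : t ≤ ε / (4 * C * M) := min_le_right _ _
    set β : ℝ := t * ε / 2 with hβdef
    have hβ0 : 0 < β := by positivity
    set A : ℕ → Set Ω := fun n => ⋃ m ∈ Finset.Icc (n - K n) (n + K n),
      {ω | ε * sq n ≤ |∑ i ∈ Finset.Ico (min m n) (max m n), X i ω|} with hAdef
    have hAbound : ∀ᶠ n : ℕ in atTop,
        ℙ (A n) ≤ ENNReal.ofReal (6 * n * Real.exp (-(β * Real.sqrt n))) := by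
      filter_upwards [aux_ev_loglog, aux_ev_sqrt (2 * C^2), aux_ev_sqrt (1/C),
        eventually_ge_atTop 1] with n hLL hsqC hsqC2 hn1
      have hn0 : (0:ℝ) < n := by exact_mod_cast hn1
      have hsqn_nonneg : (0:ℝ) ≤ Real.sqrt n := Real.sqrt_nonneg _
      have hsqn_le : Real.sqrt n ≤ sq n := by
        apply Real.sqrt_le_sqrt; nlinarith
      have hsq_nonneg : 0 ≤ sq n := Real.sqrt_nonneg _
      have hCsq1 : 1 ≤ C * sq n := by
        have h1 : 1/C ≤ sq n := le_trans hsqC2 hsqn_le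
        calc (1:ℝ) = C * (1/C) := by field_simp
          _ ≤ C * sq n := mul_le_mul_of_nonneg_left h1 hC.le
      have hK_le_2C : (K n : ℝ) ≤ 2 * C * sq n := by
        have h1 : (K n : ℝ) < C * sq n + 1 := Nat.ceil_lt_add_one (by positivity)
        linarith
      -- K n ≤ n
      have hlog1 : 1 ≤ Real.log n := by
        by_contra h
        push_neg at h
        have h2 : Real.log (Real.log n) ≤ 0 :=
          Real.log_nonpos (Real.log_nonneg (by exact_mod_cast hn1)) h.le
        linarith
      have hlog_le : Real.log n ≤ 2 * Real.sqrt n := by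
        have h1 : Real.log n = 2 * Real.log (Real.sqrt n) := by
          rw [Real.log_sqrt hn0.le]; ring
        have h2 : Real.log (Real.sqrt n) ≤ Real.sqrt n - 1 :=
          Real.log_le_sub_one_of_pos (Real.sqrt_pos.mpr hn0)
        linarith
      have hLL_le : Real.log (Real.log n) ≤ 2 * Real.sqrt n :=
        le_trans (le_trans (Real.log_le_sub_one_of_pos (by linarith)) (by linarith)) hlog_le
      have hKn : K n ≤ n := by
        rw [hKdef]
        apply Nat.ceil_le.mpr
        have hnLL : (n:ℝ) * Real.log (Real.log n) ≤ ((n:ℝ)/C)^2 := by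
          have h1 : (n:ℝ) * Real.log (Real.log n) ≤ (n:ℝ) * (2 * Real.sqrt n) :=
            mul_le_mul_of_nonneg_left hLL_le hn0.le
          have h2 : 2 * C^2 * Real.sqrt n ≤ (n:ℝ) := by
            have := mul_le_mul_of_nonneg_right hsqC hsqn_nonneg
            rwa [Real.mul_self_sqrt hn0.le] at this
          have h3 : (n:ℝ) * (2 * Real.sqrt n) ≤ (n:ℝ) * ((n:ℝ)/C^2) := by
            apply mul_le_mul_of_nonneg_left _ hn0.le
            rw [le_div_iff₀ (by positivity)]
            nlinarith
          calc (n:ℝ) * Real.log (Real.log n) ≤ (n:ℝ) * ((n:ℝ)/C^2) := le_trans h1 h3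
            _ = ((n:ℝ)/C)^2 := by field_simp
        have hsqle : sq n ≤ (n:ℝ)/C := by
          rw [hsqdef]
          exact Real.sqrt_le_left (by positivity) |>.mpr hnLL
        calc C * sq n ≤ C * ((n:ℝ)/C) := mul_le_mul_of_nonneg_left hsqle hC.le
          _ = n := by field_simp
      -- per-m bound
      have hperm : ∀ m ∈ Finset.Icc (n - K n) (n + K n),
          ℙ {ω | ε * sq n ≤ |∑ i ∈ Finset.Ico (min m n) (max m n), X i ω|} ≤
            ENNReal.ofReal (2 * Real.exp (-(β * Real.sqrt n))) := by
        intro m hm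
        rw [Finset.mem_Icc] at hm
        have hd : (max m n - min m n : ℕ) ≤ K n := by
          rcases le_total m n with h | h
          · rw [max_eq_right h, min_eq_left h]; omega
          · rw [max_eq_left h, min_eq_right h]; omega
        refine le_trans (aux_block_tail X hmeas hindep hident hc hci hmean ht0 htc
          (min m n) (max m n) (ε * sq n)) (ENNReal.ofReal_le_ofReal ?_)
        have hexp_le : -t * (ε * sq n) +
            (max m n - min m n : ℕ) * ((16 / c^2 * I) * t^2) ≤ -(β * Real.sqrt n) := by
          have hdc : ((max m n - min m n : ℕ) : ℝ) ≤ (K n : ℝ) := by exact_mod_cast hd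
          have hMt : M * t ≤ ε / (4*C) := by
            have h1 := mul_le_mul_of_nonneg_left htε hMpos.le
            have h2 : M * (ε / (4*C*M)) = ε / (4*C) := by field_simp
            linarith
          have h3 : ((max m n - min m n : ℕ) : ℝ) * (M * t^2) ≤ (2*C*sq n) * (M * t^2) :=
            mul_le_mul_of_nonneg_right (le_trans hdc hK_le_2C) (by positivity)
          have h4 : (2*C*sq n) * (M * t^2) ≤ (2*C*sq n) * (ε/(4*C) * t) := by
            apply mul_le_mul_of_nonneg_left _ (by positivity)
            calc M * t^2 = (M * t) * t := by ring
              _ ≤ (ε/(4*C)) * t := mul_le_mul_of_nonneg_right hMt ht0.le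
          have h5 : (2*C*sq n) * (ε/(4*C) * t) = β * sq n := by
            rw [hβdef]; field_simp; ring
          have h6 : β * Real.sqrt n ≤ β * sq n := mul_le_mul_of_nonneg_left hsqn_le hβ0.le
          have h7 : t * (ε * sq n) = 2 * (β * sq n) := by rw [hβdef]; ring
          rw [← hMdef]
          linarith
        exact mul_le_mul_of_nonneg_left (Real.exp_le_exp.mpr hexp_le) (by norm_num)
      -- sum over the window
      have hcard : (Finset.Icc (n - K n) (n + K n)).card ≤ 3 * n := by
        rw [Nat.card_Icc]; omega
      calc ℙ (A n) ≤ ∑ m ∈ Finset.Icc (n - K n) (n + K n),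
            ℙ {ω | ε * sq n ≤ |∑ i ∈ Finset.Ico (min m n) (max m n), X i ω|} :=
            measure_biUnion_finset_le _ _
        _ ≤ ∑ m ∈ Finset.Icc (n - K n) (n + K n),
            ENNReal.ofReal (2 * Real.exp (-(β * Real.sqrt n))) :=
            Finset.sum_le_sum hperm
        _ = ((Finset.Icc (n - K n) (n + K n)).card : ℝ≥0∞) *
            ENNReal.ofReal (2 * Real.exp (-(β * Real.sqrt n))) := by
            rw [Finset.sum_const, nsmul_eq_mul]
        _ ≤ ((3 * n : ℕ) : ℝ≥0∞) * ENNReal.ofReal (2 * Real.exp (-(β * Real.sqrt n))) := by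
            exact mul_le_mul_left (Nat.cast_le.mpr hcard) _
        _ = ENNReal.ofReal (6 * n * Real.exp (-(β * Real.sqrt n))) := by
            rw [← ENNReal.ofReal_natCast, ← ENNReal.ofReal_mul (by positivity)]
            congr 1
            push_cast
            ring
    -- Borel-Cantelli
    have htsum : (∑' n, ℙ (A n)) ≠ ⊤ := by
      obtain ⟨N, hN⟩ := eventually_atTop.mp hAbound
      have hgs : Summable (fun n : ℕ => 6 * n * Real.exp (-(β * Real.sqrt n))) :=
        aux_summable hβ0
      have hbound : ∀ n, ℙ (A n) ≤
          ENNReal.ofReal (6 * n * Real.exp (-(β * Real.sqrt n))) +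
          (if n < N then 1 else 0) := by
        intro n
        rcases lt_or_ge n N with h | h
        · rw [if_pos h]
          calc ℙ (A n) ≤ 1 := prob_le_one
            _ ≤ _ := le_add_self
        · rw [if_neg (not_lt.mpr h), add_zero]
          exact hN n h
      have hlt : (∑' n, ℙ (A n)) < ⊤ := by
        calc (∑' n, ℙ (A n))
            ≤ ∑' n : ℕ, (ENNReal.ofReal (6 * n * Real.exp (-(β * Real.sqrt n))) +
              (if n < N then 1 else 0)) := ENNReal.tsum_le_tsum hbound
          _ = (∑' n : ℕ, ENNReal.ofReal (6 * n * Real.exp (-(β * Real.sqrt n)))) +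
              ∑' n : ℕ, (if n < N then (1:ℝ≥0∞) else 0) := ENNReal.tsum_add
          _ < ⊤ := by
            apply ENNReal.add_lt_top.mpr
            constructor
            · rw [← ENNReal.ofReal_tsum_of_nonneg (fun n => by positivity) hgs]
              exact ENNReal.ofReal_lt_top
            · have heq : ∑' n, (if n < N then (1:ℝ≥0∞) else 0) =
                  ∑ n ∈ Finset.range N, (if n < N then (1:ℝ≥0∞) else 0) :=
                tsum_eq_sum (fun n hn => if_neg (by simpa using hn))
              rw [heq]
              calc ∑ n ∈ Finset.range N, (if n < N then (1:ℝ≥0∞) else 0)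
                  ≤ ∑ n ∈ Finset.range N, 1 :=
                    Finset.sum_le_sum (fun i _ => by split <;> simp)
                _ < ⊤ := by simp
      exact hlt.ne
    filter_upwards [ae_eventually_notMem htsum] with ω hω
    filter_upwards [hω] with n hn m hm
    by_contra hcon
    push_neg at hcon
    exact hn (Set.mem_biUnion hm hcon)
  -- combine
  filter_upwards [ae_all_iff.mpr key, hτ] with ω hk hτω
  rw [NormedAddCommGroup.tendsto_nhds_zero]
  intro δ hδ
  obtain ⟨k, hk'⟩ := exists_nat_one_div_lt hδ
  filter_upwards [hk k, hτω, aux_ev_loglog, eventually_ge_atTop 1] with n h1 h2 h3 h4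
  have hn0 : (0:ℝ) < n := by exact_mod_cast h4
  have hsqpos : 0 < sq n := Real.sqrt_pos.mpr (by nlinarith)
  set m : ℕ := τ n ω with hmdef
  rw [abs_le] at h2
  have hceil : C * sq n ≤ (K n : ℝ) := Nat.le_ceil _
  have hm_hi : m ≤ n + K n := by
    have hr : (m:ℝ) ≤ (n:ℝ) + (K n : ℝ) := by linarith [h2.2]
    exact_mod_cast hr
  have hm_lo : n - K n ≤ m := by
    have hr : (n:ℝ) ≤ (m:ℝ) + (K n : ℝ) := by linarith [h2.1]
    have h' : n ≤ m + K n := by exact_mod_cast hr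
    omega
  have hmem : m ∈ Finset.Icc (n - K n) (n + K n) := Finset.mem_Icc.mpr ⟨hm_lo, hm_hi⟩
  have hlt := h1 m hmem
  have habs : |S m ω - S n ω| < (1 / (k+1 : ℝ)) * sq n := by
    rcases le_total m n with hmn | hmn
    · rw [min_eq_left hmn, max_eq_right hmn] at hlt
      have hsum : ∑ i ∈ Finset.Ico m n, X i ω = S n ω - S m ω := by
        rw [hS, hS, Finset.sum_Ico_eq_sub _ hmn]
      rw [hsum, abs_sub_comm] at hlt
      exact hlt
    · rw [min_eq_right hmn, max_eq_left hmn] at hlt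
      have hsum : ∑ i ∈ Finset.Ico n m, X i ω = S m ω - S n ω := by
        rw [hS, hS, Finset.sum_Ico_eq_sub _ hmn]
      rw [hsum] at hlt
      exact hlt
  have hfn : |S m ω - S n ω| / sq n < δ := by
    rw [div_lt_iff₀ hsqpos]
    calc |S m ω - S n ω| < (1 / (k+1 : ℝ)) * sq n := habs
      _ < δ * sq n := by exact mul_lt_mul_of_pos_right hk' hsqpos
  rw [Real.norm_eq_abs, abs_of_nonneg (by positivity)]
  exact hfn
end
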